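/- Let α > 0, θ > 2, and p ≥ max(1, 2·((1+2α)^{−1} + 2α)^{−1}). Every coefficient array β satisfying the Besov condition B^α_{p,∞} satisfies both the condition B^{α/(1+2α)}_{2,∞} and the condition A^α_θ. -/

import Mathlib

open scoped BigOperators

/-- A coefficient array `β` is square-summable if `Σ_{j,k} β_{j,k}² < ∞`. -/
def SqSummable (β : ℕ → ℕ → ℝ) : Prop :=
  Summable fun j : ℕ => ∑ k ∈ Finset.range (2 ^ j), (β j k) ^ 2

/-- The Besov condition `B^α_{p,∞}`. -/
def CondBesov (β : ℕ → ℕ → ℝ) (α p : ℝ) : Prop :=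
  ∃ C : ℝ, ∀ j : ℕ,
    (2 : ℝ) ^ ((j : ℝ) * p * (α + 1 / 2 - 1 / p)) *
      ∑ k ∈ Finset.range (2 ^ j), |β j k| ^ p ≤ C

/-- The condition `B^{α/(1+2α)}_{2,∞}`. -/
def CondB2 (β : ℕ → ℕ → ℝ) (α : ℝ) : Prop :=
  ∃ C : ℝ, ∀ J : ℕ,
    (2 : ℝ) ^ (2 * (J : ℝ) * α / (1 + 2 * α)) *
      ∑' j : ℕ, (if J ≤ j then ∑ k ∈ Finset.range (2 ^ j), (β j k) ^ 2 else 0) ≤ C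

/-- `N(J,j) = min(⌊2^J (j−J+1)^{−θ}⌋, 2^j)`. -/
noncomputable def NJj (θ : ℝ) (J j : ℕ) : ℕ :=
  min ⌊(2 : ℝ) ^ J * ((j : ℝ) - (J : ℝ) + 1) ^ (-θ)⌋₊ (2 ^ j)

/-- `t_{j,J}(β)`: the minimum over subsets `A` of `{0,…,2^j−1}` of cardinality `N(J,j)`
of `Σ_{k ∉ A} β_{j,k}²`, i.e. the sum of squares of all but the `N(J,j)` largest
`|β_{j,k}|` at level `j`. -/
noncomputable def tTail (β : ℕ → ℕ → ℝ) (θ : ℝ) (J j : ℕ) : ℝ :=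
  sInf {x : ℝ | ∃ A : Finset ℕ, A ⊆ Finset.range (2 ^ j) ∧ A.card = NJj θ J j ∧
    x = ∑ k ∈ Finset.range (2 ^ j) \ A, (β j k) ^ 2}

/-- The condition `A^α_θ`. -/
def CondA (β : ℕ → ℕ → ℝ) (α θ : ℝ) : Prop :=
  ∃ C : ℝ, ∀ J : ℕ,
    (2 : ℝ) ^ (2 * (J : ℝ) * α) *
      ∑' j : ℕ, (if J ≤ j then tTail β θ J j else 0) ≤ C

section MyAux

open Finset
set_option maxHeartbeats 1000000

private lemma my_add_rpow {a b u : ℝ} (ha : 0 ≤ a) (hb : 0 ≤ b) (hu : 1 ≤ u) :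
    a ^ u + b ^ u ≤ (a + b) ^ u := by
  lift a to NNReal using ha
  lift b to NNReal using hb
  have := NNReal.add_rpow_le_rpow_add a b hu
  exact_mod_cast this

private lemma my_sum_rpow_le_rpow_sum {u : ℝ} (hu : 1 ≤ u) (s : Finset ℕ) (a : ℕ → ℝ)
    (ha : ∀ k ∈ s, 0 ≤ a k) : ∑ k ∈ s, a k ^ u ≤ (∑ k ∈ s, a k) ^ u := by
  classical
  induction s using Finset.induction_on with
  | empty => simp [Real.zero_rpow (by linarith : u ≠ 0)]
  | @insert x t hx ih =>
      have hax : 0 ≤ a x := ha x (mem_insert_self _ _)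
      have hat : ∀ k ∈ t, 0 ≤ a k := fun k hk => ha k (mem_insert_of_mem hk)
      have hts : 0 ≤ ∑ k ∈ t, a k := Finset.sum_nonneg hat
      rw [Finset.sum_insert hx, Finset.sum_insert hx]
      calc a x ^ u + ∑ k ∈ t, a k ^ u ≤ a x ^ u + (∑ k ∈ t, a k) ^ u := by
            linarith [ih hat]
        _ ≤ (a x + ∑ k ∈ t, a k) ^ u := my_add_rpow hax hts hu

private lemma my_exists_topN (n N : ℕ) (hN : N ≤ n) (f : ℕ → ℝ) :
    ∃ A : Finset ℕ, A ⊆ Finset.range n ∧ A.card = N ∧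
      ∀ k ∈ Finset.range n \ A, ∀ l ∈ A, f k ≤ f l := by
  obtain ⟨A₀, hA₀, hcard₀⟩ := Finset.exists_subset_card_eq
    (show N ≤ (Finset.range n).card by simpa using hN)
  have hne : ((Finset.range n).powersetCard N).Nonempty :=
    ⟨A₀, Finset.mem_powersetCard.2 ⟨hA₀, hcard₀⟩⟩
  obtain ⟨A, hAmem, hAmax⟩ := Finset.exists_max_image _ (fun B => ∑ l ∈ B, f l) hne
  obtain ⟨hAsub, hAcard⟩ := Finset.mem_powersetCard.1 hAmem
  refine ⟨A, hAsub, hAcard, ?_⟩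
  intro k hk l hl
  by_contra hlt
  push_neg at hlt
  have hkA : k ∉ A := (Finset.mem_sdiff.1 hk).2
  have hkrange : k ∈ Finset.range n := (Finset.mem_sdiff.1 hk).1
  have hknotin : k ∉ A.erase l := fun h => hkA (Finset.mem_of_mem_erase h)
  have hBsub : insert k (A.erase l) ⊆ Finset.range n :=
    Finset.insert_subset hkrange ((Finset.erase_subset _ _).trans hAsub)
  have hNpos : 0 < N := hAcard ▸ Finset.card_pos.2 ⟨l, hl⟩
  have hBcard : (insert k (A.erase l)).card = N := by
    rw [Finset.card_insert_of_notMem hknotin, Finset.card_erase_of_mem hl, hAcard]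
    omega
  have hBsum := hAmax (insert k (A.erase l)) (Finset.mem_powersetCard.2 ⟨hBsub, hBcard⟩)
  rw [Finset.sum_insert hknotin, Finset.sum_erase_eq_sub hl] at hBsum
  linarith

private lemma my_sq_eq_rpow (x : ℝ) {p : ℝ} (hp : p ≠ 0) : x ^ 2 = (|x| ^ p) ^ (2 / p) := by
  have h : p * (2 / p) = 2 := by field_simp
  calc x ^ 2 = |x| ^ (2 : ℕ) := (sq_abs x).symm
    _ = |x| ^ ((2 : ℕ) : ℝ) := (Real.rpow_natCast _ 2).symm
    _ = |x| ^ (p * (2 / p)) := by rw [h]; norm_num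
    _ = (|x| ^ p) ^ (2 / p) := Real.rpow_mul (abs_nonneg x) p (2 / p)

private lemma my_two_rpow_nat_pow (y : ℝ) (i : ℕ) : ((2:ℝ) ^ y) ^ i = (2:ℝ) ^ (y * i) := by
  rw [← Real.rpow_natCast ((2:ℝ) ^ y) i, ← Real.rpow_mul (by norm_num : (0:ℝ) ≤ 2)]

private lemma my_geom_poly_summable {q r : ℝ} (hq : 0 ≤ q) (hr0 : 0 ≤ r) (hr1 : r < 1) :
    Summable fun i : ℕ => ((i : ℝ) + 1) ^ q * r ^ i := by
  rcases eq_or_lt_of_le hr0 with hr | hr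
  · apply summable_of_ne_finset_zero (s := {0})
    intro i hi
    have : i ≠ 0 := by simpa using hi
    simp [← hr, zero_pow this]
  · set m := ⌈q⌉₊ with hm
    have hg : Summable fun n : ℕ => (n : ℝ) ^ m * r ^ n := by
      apply summable_pow_mul_geometric_of_norm_lt_one
      rw [Real.norm_eq_abs, abs_of_nonneg hr0]; exact hr1
    have hg1 : Summable fun i : ℕ => ((i + 1 : ℕ) : ℝ) ^ m * r ^ (i + 1) :=
      (summable_nat_add_iff 1).2 hg
    have hg2 : Summable fun i : ℕ => r⁻¹ * (((i + 1 : ℕ) : ℝ) ^ m * r ^ (i + 1)) :=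
      hg1.mul_left _
    apply Summable.of_nonneg_of_le
      (fun i => by positivity)
      (fun i => ?_) hg2
    have h1 : ((i : ℝ) + 1) ^ q ≤ ((i : ℝ) + 1) ^ (m : ℝ) :=
      Real.rpow_le_rpow_of_exponent_le (by linarith [Nat.cast_nonneg (α := ℝ) i])
        (Nat.le_ceil q)
    have h2 : ((i : ℝ) + 1) ^ (m : ℝ) = ((i + 1 : ℕ) : ℝ) ^ m := by
      rw [Real.rpow_natCast]; push_cast; ring
    have h3 : r⁻¹ * (((i + 1 : ℕ) : ℝ) ^ m * r ^ (i + 1)) = ((i + 1 : ℕ) : ℝ) ^ m * r ^ i := by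
      rw [pow_succ, show r⁻¹ * (((i + 1 : ℕ) : ℝ) ^ m * (r ^ i * r)) =
        ((i + 1 : ℕ) : ℝ) ^ m * r ^ i * (r * r⁻¹) from by ring,
        mul_inv_cancel₀ (ne_of_gt hr), mul_one]
    rw [h3]
    apply mul_le_mul_of_nonneg_right _ (pow_nonneg hr0 i)
    rw [← h2]; exact h1

private lemma my_tsum_shift (g : ℕ → ℝ) (J : ℕ) :
    ∑' j : ℕ, (if J ≤ j then g j else 0) = ∑' i : ℕ, g (J + i) := by
  have hinj : Function.Injective (fun i : ℕ => J + i) := fun a b h => by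
    dsimp only at h; omega
  have hsupp : Function.support (fun j : ℕ => if J ≤ j then g j else 0) ⊆
      Set.range (fun i : ℕ => J + i) := by
    intro j hj
    by_cases h : J ≤ j
    · exact ⟨j - J, by dsimp only; omega⟩
    · simp [h] at hj
  have := hinj.tsum_eq hsupp
  rw [← this]
  apply tsum_congr
  intro i
  simp [Nat.le_add_right]

private lemma my_tsum_ite_le {f : ℕ → ℝ} {J : ℕ} {c q r : ℝ} (hq : 0 ≤ q)
    (hr0 : 0 ≤ r) (hr1 : r < 1) (hf0 : ∀ j, 0 ≤ f j)
    (hb : ∀ i : ℕ, f (J + i) ≤ c * (((i : ℝ) + 1) ^ q * r ^ i)) :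
    ∑' j : ℕ, (if J ≤ j then f j else 0) ≤ c * ∑' i : ℕ, ((i : ℝ) + 1) ^ q * r ^ i := by
  rw [my_tsum_shift]
  have hsum : Summable fun i : ℕ => c * (((i : ℝ) + 1) ^ q * r ^ i) :=
    (my_geom_poly_summable hq hr0 hr1).mul_left c
  have hfs : Summable fun i : ℕ => f (J + i) :=
    Summable.of_nonneg_of_le (fun i => hf0 _) hb hsum
  calc ∑' i : ℕ, f (J + i) ≤ ∑' i : ℕ, c * (((i : ℝ) + 1) ^ q * r ^ i) :=
        Summable.tsum_le_tsum hb hfs hsum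
    _ = c * ∑' i : ℕ, ((i : ℝ) + 1) ^ q * r ^ i := tsum_mul_left

private lemma my_tTail_bddBelow (β : ℕ → ℕ → ℝ) (θ : ℝ) (J j : ℕ) :
    BddBelow {x : ℝ | ∃ A : Finset ℕ, A ⊆ Finset.range (2 ^ j) ∧ A.card = NJj θ J j ∧
      x = ∑ k ∈ Finset.range (2 ^ j) \ A, (β j k) ^ 2} := by
  refine ⟨0, ?_⟩
  rintro x ⟨A, -, -, rfl⟩
  positivity

private lemma my_tTail_nonneg (β : ℕ → ℕ → ℝ) (θ : ℝ) (J j : ℕ) : 0 ≤ tTail β θ J j := by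
  apply Real.sInf_nonneg
  rintro x ⟨A, -, -, rfl⟩
  positivity

private lemma my_tTail_le (β : ℕ → ℕ → ℝ) (θ : ℝ) (J j : ℕ) (A : Finset ℕ)
    (hA : A ⊆ Finset.range (2 ^ j)) (hcard : A.card = NJj θ J j) :
    tTail β θ J j ≤ ∑ k ∈ Finset.range (2 ^ j) \ A, (β j k) ^ 2 :=
  csInf_le (my_tTail_bddBelow β θ J j) ⟨A, hA, hcard, rfl⟩

private lemma my_tTail_le_sum (β : ℕ → ℕ → ℝ) (θ : ℝ) (J j : ℕ) :
    tTail β θ J j ≤ ∑ k ∈ Finset.range (2 ^ j), (β j k) ^ 2 := by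
  obtain ⟨A, hA, hcard⟩ := Finset.exists_subset_card_eq
    (show NJj θ J j ≤ (Finset.range (2 ^ j)).card by
      rw [Finset.card_range]; exact min_le_right _ _)
  calc tTail β θ J j ≤ ∑ k ∈ Finset.range (2 ^ j) \ A, (β j k) ^ 2 :=
        my_tTail_le β θ J j A hA hcard
    _ ≤ ∑ k ∈ Finset.range (2 ^ j), (β j k) ^ 2 :=
        Finset.sum_le_sum_of_subset_of_nonneg (Finset.sdiff_subset)
          (fun k _ _ => by positivity)

private lemma my_tTail_refined (β : ℕ → ℕ → ℝ) (θ : ℝ) {p : ℝ} (J j : ℕ) (hJj : J ≤ j)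
    (hp1 : 1 ≤ p) (hp2 : p ≤ 2) :
    tTail β θ J j ≤
      (2 * (∑ k ∈ Finset.range (2 ^ j), |β j k| ^ p) /
        ((2 : ℝ) ^ J * ((j : ℝ) - (J : ℝ) + 1) ^ (-θ))) ^ (2 / p - 1) *
        (∑ k ∈ Finset.range (2 ^ j), |β j k| ^ p) := by
  have hp0 : (0:ℝ) < p := lt_of_lt_of_le one_pos hp1
  set S : ℝ := ∑ k ∈ Finset.range (2 ^ j), |β j k| ^ p with hSdef
  set x : ℝ := (2 : ℝ) ^ J * ((j : ℝ) - (J : ℝ) + 1) ^ (-θ) with hxdef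
  have hS0 : 0 ≤ S := Finset.sum_nonneg fun k _ => Real.rpow_nonneg (abs_nonneg _) _
  have hu1 : (1:ℝ) ≤ (j : ℝ) - (J : ℝ) + 1 := by
    have : (J:ℝ) ≤ (j:ℝ) := Nat.cast_le.2 hJj
    linarith
  have hxpos : 0 < x := by
    rw [hxdef]
    exact mul_pos (pow_pos two_pos J) (Real.rpow_pos_of_pos (by linarith) _)
  have he0 : 0 ≤ 2 / p - 1 := by
    have h1 : 1 ≤ 2 / p := (le_div_iff₀ hp0).2 (by linarith)
    linarith
  have h2p0 : 2 / p ≠ 0 := ne_of_gt (div_pos two_pos hp0)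
  have hfac0 : 0 ≤ (2 * S / x) ^ (2 / p - 1) :=
    Real.rpow_nonneg (by positivity) _
  have hN_def : NJj θ J j = min ⌊x⌋₊ (2 ^ j) := by rw [hxdef]; rfl
  by_cases hN2 : NJj θ J j = 2 ^ j
  · have h := my_tTail_le β θ J j (Finset.range (2 ^ j)) (subset_refl _)
      (by rw [Finset.card_range, hN2])
    rw [Finset.sdiff_self, Finset.sum_empty] at h
    exact h.trans (by positivity)
  · have hNlt : NJj θ J j < 2 ^ j := lt_of_le_of_ne (hN_def ▸ min_le_right _ _) hN2
    by_cases hN0 : NJj θ J j = 0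
    · have hfl : ⌊x⌋₊ = 0 := by
        rw [hN_def] at hN0
        rcases Nat.min_eq_zero_iff.1 hN0 with h | h
        · exact h
        · exact absurd h (Nat.pos_iff_ne_zero.1 (Nat.pow_pos (n := j) two_pos)).elim
      have hxlt1 : x < 1 := Nat.floor_eq_zero.1 hfl
      have h := my_tTail_le β θ J j ∅ (Finset.empty_subset _) (by simp [hN0])
      rw [Finset.sdiff_empty] at h
      refine h.trans ?_
      have hT_le : ∑ k ∈ Finset.range (2 ^ j), (β j k) ^ 2 ≤ S ^ (2 / p) := by
        have hcong : ∑ k ∈ Finset.range (2 ^ j), (β j k) ^ 2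
            = ∑ k ∈ Finset.range (2 ^ j), (|β j k| ^ p) ^ (2 / p) :=
          Finset.sum_congr rfl fun k _ => my_sq_eq_rpow _ (ne_of_gt hp0)
        rw [hcong, hSdef]
        exact my_sum_rpow_le_rpow_sum ((le_div_iff₀ hp0).2 (by linarith)) _ _
          (fun k _ => Real.rpow_nonneg (abs_nonneg _) _)
      refine hT_le.trans ?_
      rcases eq_or_lt_of_le hS0 with hSz | hSpos
      · rw [← hSz, Real.zero_rpow h2p0, mul_zero]
      · have hS_le : S ≤ 2 * S / x := by
          rw [le_div_iff₀ hxpos]; nlinarith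
        calc S ^ (2 / p) = S ^ (2 / p - 1 + 1) := by ring_nf
          _ = S ^ (2 / p - 1) * S ^ (1:ℝ) := Real.rpow_add hSpos _ _
          _ = S ^ (2 / p - 1) * S := by rw [Real.rpow_one]
          _ ≤ (2 * S / x) ^ (2 / p - 1) * S :=
              mul_le_mul_of_nonneg_right (Real.rpow_le_rpow hS0 hS_le he0) hS0
    · have hNpos : 0 < NJj θ J j := Nat.pos_of_ne_zero hN0
      have hfl : NJj θ J j = ⌊x⌋₊ := by
        rcases le_total (⌊x⌋₊) (2 ^ j) with h | h
        · rw [hN_def, min_eq_left h]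
        · rw [hN_def, min_eq_right h] at hNlt; omega
      have hx1 : (1:ℝ) ≤ x := Nat.floor_pos.1 (hfl ▸ hNpos)
      have hNge : x / 2 ≤ (NJj θ J j : ℝ) := by
        rcases le_total 2 x with h2x | h2x
        · have hsub := Nat.sub_one_lt_floor x
          rw [← hfl] at hsub
          linarith
        · have h1 : (1:ℝ) ≤ (NJj θ J j : ℝ) := by exact_mod_cast hNpos
          linarith
      obtain ⟨A, hAsub, hAcard, hAmax⟩ :=
        my_exists_topN (2 ^ j) (NJj θ J j) (le_of_lt hNlt) (fun k => |β j k| ^ p)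
      refine (my_tTail_le β θ J j A hAsub hAcard).trans ?_
      have hkey : ∀ k ∈ Finset.range (2 ^ j) \ A, |β j k| ^ p ≤ 2 * S / x := by
        intro k hk
        have ha0 : (0:ℝ) ≤ |β j k| ^ p := Real.rpow_nonneg (abs_nonneg _) _
        have h1 : (NJj θ J j) • (|β j k| ^ p) ≤ ∑ l ∈ A, |β j l| ^ p := by
          rw [← hAcard]
          exact Finset.card_nsmul_le_sum A _ _ (fun l hl => hAmax k hk l hl)
        have h2 : ∑ l ∈ A, |β j l| ^ p ≤ S :=
          Finset.sum_le_sum_of_subset_of_nonneg hAsub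
            (fun l _ _ => Real.rpow_nonneg (abs_nonneg _) _)
        have h3 : (NJj θ J j : ℝ) * |β j k| ^ p ≤ S := by
          rw [← nsmul_eq_mul]; exact h1.trans h2
        rw [le_div_iff₀ hxpos]
        nlinarith [mul_le_mul_of_nonneg_left hNge ha0]
      have hterm : ∀ k ∈ Finset.range (2 ^ j) \ A,
          (β j k) ^ 2 ≤ (2 * S / x) ^ (2 / p - 1) * (|β j k| ^ p) := by
        intro k hk
        rw [my_sq_eq_rpow (β j k) (ne_of_gt hp0)]
        have ha0 : (0:ℝ) ≤ |β j k| ^ p := Real.rpow_nonneg (abs_nonneg _) _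
        rcases eq_or_lt_of_le ha0 with h0 | hpos
        · rw [← h0, Real.zero_rpow h2p0, mul_zero]
        · calc (|β j k| ^ p) ^ (2 / p) = (|β j k| ^ p) ^ (2 / p - 1 + 1) := by ring_nf
            _ = (|β j k| ^ p) ^ (2 / p - 1) * (|β j k| ^ p) ^ (1:ℝ) :=
                Real.rpow_add hpos _ _
            _ = (|β j k| ^ p) ^ (2 / p - 1) * (|β j k| ^ p) := by rw [Real.rpow_one]
            _ ≤ (2 * S / x) ^ (2 / p - 1) * (|β j k| ^ p) :=
                mul_le_mul_of_nonneg_right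
                  (Real.rpow_le_rpow ha0 (hkey k hk) he0) ha0
      calc ∑ k ∈ Finset.range (2 ^ j) \ A, (β j k) ^ 2
          ≤ ∑ k ∈ Finset.range (2 ^ j) \ A, (2 * S / x) ^ (2 / p - 1) * (|β j k| ^ p) :=
            Finset.sum_le_sum hterm
        _ = (2 * S / x) ^ (2 / p - 1) * ∑ k ∈ Finset.range (2 ^ j) \ A, |β j k| ^ p :=
            (Finset.mul_sum _ _ _).symm
        _ ≤ (2 * S / x) ^ (2 / p - 1) * S := by
            apply mul_le_mul_of_nonneg_left _ hfac0
            exact Finset.sum_le_sum_of_subset_of_nonneg (Finset.sdiff_subset)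
              (fun k _ _ => Real.rpow_nonneg (abs_nonneg _) _)

private lemma my_level_ple2 (β : ℕ → ℕ → ℝ) {p δ M' : ℝ} (j : ℕ) (hp1 : 1 ≤ p) (hple : p ≤ 2)
    (hM' : 0 < M')
    (hS : ∑ k ∈ Finset.range (2 ^ j), |β j k| ^ p ≤ M' * (2:ℝ) ^ (-((j:ℝ) * p * δ))) :
    ∑ k ∈ Finset.range (2 ^ j), (β j k) ^ 2 ≤ M' ^ (2 / p) * (2:ℝ) ^ (-(2 * δ) * (j:ℝ)) := by
  have hp0 : (0:ℝ) < p := lt_of_lt_of_le one_pos hp1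
  set S : ℝ := ∑ k ∈ Finset.range (2 ^ j), |β j k| ^ p with hSdef
  have hS0 : 0 ≤ S := Finset.sum_nonneg fun k _ => Real.rpow_nonneg (abs_nonneg _) _
  have hT_le : ∑ k ∈ Finset.range (2 ^ j), (β j k) ^ 2 ≤ S ^ (2 / p) := by
    have hcong : ∑ k ∈ Finset.range (2 ^ j), (β j k) ^ 2
        = ∑ k ∈ Finset.range (2 ^ j), (|β j k| ^ p) ^ (2 / p) :=
      Finset.sum_congr rfl fun k _ => my_sq_eq_rpow _ (ne_of_gt hp0)
    rw [hcong, hSdef]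
    exact my_sum_rpow_le_rpow_sum ((le_div_iff₀ hp0).2 (by linarith)) _ _
      (fun k _ => Real.rpow_nonneg (abs_nonneg _) _)
  refine hT_le.trans ?_
  calc S ^ (2 / p) ≤ (M' * (2:ℝ) ^ (-((j:ℝ) * p * δ))) ^ (2 / p) :=
        Real.rpow_le_rpow hS0 hS (by positivity)
    _ = M' ^ (2 / p) * ((2:ℝ) ^ (-((j:ℝ) * p * δ))) ^ (2 / p) :=
        Real.mul_rpow (le_of_lt hM') (Real.rpow_nonneg (by norm_num) _)
    _ = M' ^ (2 / p) * (2:ℝ) ^ (-((j:ℝ) * p * δ) * (2 / p)) := by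
        rw [← Real.rpow_mul (by norm_num : (0:ℝ) ≤ 2)]
    _ = M' ^ (2 / p) * (2:ℝ) ^ (-(2 * δ) * (j:ℝ)) := by
        congr 1
        congr 1
        field_simp

private lemma my_level_pge2 (β : ℕ → ℕ → ℝ) {p α δ M' : ℝ} (j : ℕ) (hpge : 2 ≤ p)
    (hM' : 0 < M') (hδ : δ = α + 1 / 2 - 1 / p)
    (hS : ∑ k ∈ Finset.range (2 ^ j), |β j k| ^ p ≤ M' * (2:ℝ) ^ (-((j:ℝ) * p * δ))) :
    ∑ k ∈ Finset.range (2 ^ j), (β j k) ^ 2 ≤ M' ^ (2 / p) * (2:ℝ) ^ (-(2 * α) * (j:ℝ)) := by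
  have hp0 : (0:ℝ) < p := lt_of_lt_of_le two_pos hpge
  set S : ℝ := ∑ k ∈ Finset.range (2 ^ j), |β j k| ^ p with hSdef
  set T : ℝ := ∑ k ∈ Finset.range (2 ^ j), (β j k) ^ 2 with hTdef
  have hS0 : 0 ≤ S := Finset.sum_nonneg fun k _ => Real.rpow_nonneg (abs_nonneg _) _
  have hT0 : 0 ≤ T := Finset.sum_nonneg fun k _ => sq_nonneg _
  have hple : (1:ℝ) ≤ p / 2 := by linarith
  have hcast : (((Finset.range (2 ^ j)).card : ℕ) : ℝ) = (2:ℝ) ^ ((j:ℝ)) := by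
    rw [Finset.card_range, Real.rpow_natCast]
    push_cast
    ring
  have hstep : T ^ (p / 2) ≤ ((2:ℝ) ^ ((j:ℝ))) ^ (p / 2 - 1) * S := by
    have h := Real.rpow_sum_le_const_mul_sum_rpow_of_nonneg
      (s := Finset.range (2 ^ j)) (f := fun k => (β j k) ^ 2) hple
      (fun k _ => sq_nonneg _)
    rw [hcast] at h
    have hterm : ∑ k ∈ Finset.range (2 ^ j), ((β j k) ^ 2) ^ (p / 2)
        = S := by
      rw [hSdef]
      refine Finset.sum_congr rfl fun k _ => ?_
      have h2 : (β j k) ^ 2 = |β j k| ^ ((2:ℕ):ℝ) := by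
        rw [Real.rpow_natCast]; exact (sq_abs _).symm
      rw [h2, ← Real.rpow_mul (abs_nonneg _)]
      push_cast
      rw [show (2:ℝ) * (p / 2) = p by ring]
    rw [hterm] at h
    exact h
  have hT_eq : T = (T ^ (p / 2)) ^ (2 / p) := by
    rw [← Real.rpow_mul hT0, show p / 2 * (2 / p) = 1 by field_simp, Real.rpow_one]
  have hfac0 : (0:ℝ) ≤ ((2:ℝ) ^ ((j:ℝ))) ^ (p / 2 - 1) :=
    Real.rpow_nonneg (Real.rpow_nonneg (by norm_num) _) _
  calc T = (T ^ (p / 2)) ^ (2 / p) := hT_eq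
    _ ≤ (((2:ℝ) ^ ((j:ℝ))) ^ (p / 2 - 1) * S) ^ (2 / p) :=
        Real.rpow_le_rpow (Real.rpow_nonneg hT0 _) hstep (by positivity)
    _ ≤ (((2:ℝ) ^ ((j:ℝ))) ^ (p / 2 - 1) * (M' * (2:ℝ) ^ (-((j:ℝ) * p * δ)))) ^ (2 / p) :=
        Real.rpow_le_rpow (by positivity) (mul_le_mul_of_nonneg_left hS hfac0) (by positivity)
    _ = ((2:ℝ) ^ ((j:ℝ) * (p / 2 - 1)) * (M' * (2:ℝ) ^ (-((j:ℝ) * p * δ)))) ^ (2 / p) := by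
        rw [← Real.rpow_mul (by norm_num : (0:ℝ) ≤ 2)]
    _ = ((2:ℝ) ^ ((j:ℝ) * (p / 2 - 1))) ^ (2 / p) *
          (M' ^ (2 / p) * ((2:ℝ) ^ (-((j:ℝ) * p * δ))) ^ (2 / p)) := by
        rw [Real.mul_rpow (Real.rpow_nonneg (by norm_num) _) (by positivity),
          Real.mul_rpow (le_of_lt hM') (Real.rpow_nonneg (by norm_num) _)]
    _ = M' ^ (2 / p) * ((2:ℝ) ^ ((j:ℝ) * (p / 2 - 1) * (2 / p)) *
          (2:ℝ) ^ (-((j:ℝ) * p * δ) * (2 / p))) := by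
        rw [← Real.rpow_mul (by norm_num : (0:ℝ) ≤ 2),
          ← Real.rpow_mul (by norm_num : (0:ℝ) ≤ 2)]
        ring
    _ = M' ^ (2 / p) * (2:ℝ) ^ ((j:ℝ) * (p / 2 - 1) * (2 / p) + -((j:ℝ) * p * δ) * (2 / p)) := by
        rw [← Real.rpow_add (by norm_num : (0:ℝ) < 2)]
    _ = M' ^ (2 / p) * (2:ℝ) ^ (-(2 * α) * (j:ℝ)) := by
        congr 1
        congr 1
        rw [hδ]
        field_simp
        ring

private lemma my_condA_bound (β : ℕ → ℕ → ℝ) {θ p α δ M' : ℝ} (hp1 : 1 ≤ p) (hple : p ≤ 2)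
    (hM' : 0 < M') (hδ : δ = α + 1 / 2 - 1 / p)
    (hS : ∀ j : ℕ, ∑ k ∈ Finset.range (2 ^ j), |β j k| ^ p ≤ M' * (2:ℝ) ^ (-((j:ℝ) * p * δ)))
    (J i : ℕ) :
    tTail β θ J (J + i) ≤ ((2:ℝ) ^ (2 / p - 1) * M' ^ (2 / p) * (2:ℝ) ^ (-(2 * α) * (J:ℝ))) *
      (((i:ℝ) + 1) ^ (θ * (2 / p - 1)) * ((2:ℝ) ^ (-(2 * δ))) ^ i) := by
  have hp0 : (0:ℝ) < p := lt_of_lt_of_le one_pos hp1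
  set e : ℝ := 2 / p - 1 with hedef
  have he0 : 0 ≤ e := by
    rw [hedef]
    have h1 : 1 ≤ 2 / p := (le_div_iff₀ hp0).2 (by linarith)
    linarith
  set u : ℝ := (i:ℝ) + 1 with hudef
  have hu0 : (0:ℝ) < u := by rw [hudef]; positivity
  set w : ℝ := ((J + i : ℕ):ℝ) * p * δ with hwdef
  set S : ℝ := ∑ k ∈ Finset.range (2 ^ (J + i)), |β (J + i) k| ^ p with hSdef
  have hS0 : 0 ≤ S := Finset.sum_nonneg fun k _ => Real.rpow_nonneg (abs_nonneg _) _
  set Mj : ℝ := M' * (2:ℝ) ^ (-w) with hMjdef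
  have hMj0 : 0 < Mj := by
    rw [hMjdef]; exact mul_pos hM' (Real.rpow_pos_of_pos two_pos _)
  have hSMj : S ≤ Mj := hS (J + i)
  have hu_eq : ((J + i : ℕ):ℝ) - (J:ℝ) + 1 = u := by rw [hudef]; push_cast; ring
  set x : ℝ := (2:ℝ) ^ J * u ^ (-θ) with hxdef
  have hxpos : 0 < x := by
    rw [hxdef]; exact mul_pos (pow_pos two_pos J) (Real.rpow_pos_of_pos hu0 _)
  have href := my_tTail_refined β θ (J := J) (j := J + i) (Nat.le_add_right _ _) hp1 hple
  rw [hu_eq] at href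
  have h1 : (2 * S / x) ^ e * S ≤ (2 * Mj / x) ^ e * Mj := by
    apply mul_le_mul _ hSMj hS0 (Real.rpow_nonneg (by positivity) _)
    apply Real.rpow_le_rpow (by positivity) _ he0
    gcongr
  refine href.trans (h1.trans (le_of_eq ?_))
  have hne1 : (2:ℝ) ^ w ≠ 0 := ne_of_gt (Real.rpow_pos_of_pos two_pos _)
  have hne2 : (2:ℝ) ^ ((J:ℝ)) ≠ 0 := ne_of_gt (Real.rpow_pos_of_pos two_pos _)
  have hne3 : u ^ θ ≠ 0 := ne_of_gt (Real.rpow_pos_of_pos hu0 _)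
  have hL : 2 * Mj / x = M' * ((2:ℝ) ^ ((1:ℝ) - w - (J:ℝ)) * u ^ θ) := by
    rw [hxdef, hMjdef,
      show ((2:ℝ) ^ J : ℝ) = (2:ℝ) ^ ((J:ℝ)) from (Real.rpow_natCast 2 J).symm,
      Real.rpow_neg (le_of_lt hu0) θ,
      show (1:ℝ) - w - (J:ℝ) = 1 - w + -(J:ℝ) from by ring,
      Real.rpow_add two_pos, Real.rpow_sub two_pos, Real.rpow_one,
      Real.rpow_neg (by norm_num : (0:ℝ) ≤ 2) (J:ℝ),
      Real.rpow_neg (by norm_num : (0:ℝ) ≤ 2) w]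
    field_simp
  calc (2 * Mj / x) ^ e * Mj
      = (M' * ((2:ℝ) ^ ((1:ℝ) - w - (J:ℝ)) * u ^ θ)) ^ e * (M' * (2:ℝ) ^ (-w)) := by
        rw [hL, hMjdef]
    _ = (M' ^ e * (((2:ℝ) ^ ((1:ℝ) - w - (J:ℝ))) ^ e * (u ^ θ) ^ e)) * (M' * (2:ℝ) ^ (-w)) := by
        rw [Real.mul_rpow (le_of_lt hM') (by positivity),
          Real.mul_rpow (Real.rpow_nonneg (by norm_num) _) (Real.rpow_nonneg (le_of_lt hu0) _)]
    _ = (M' ^ e * ((2:ℝ) ^ (((1:ℝ) - w - (J:ℝ)) * e) * u ^ (θ * e))) * (M' * (2:ℝ) ^ (-w)) := by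
        rw [← Real.rpow_mul (by norm_num : (0:ℝ) ≤ 2), ← Real.rpow_mul (le_of_lt hu0)]
    _ = (M' ^ e * M' ^ (1:ℝ)) *
          (((2:ℝ) ^ (((1:ℝ) - w - (J:ℝ)) * e) * (2:ℝ) ^ (-w)) * u ^ (θ * e)) := by
        rw [Real.rpow_one]; ring
    _ = M' ^ (e + 1) * ((2:ℝ) ^ (((1:ℝ) - w - (J:ℝ)) * e + -w) * u ^ (θ * e)) := by
        rw [← Real.rpow_add hM', ← Real.rpow_add two_pos]
    _ = M' ^ (2 / p) * ((2:ℝ) ^ (e + -(2 * α) * (J:ℝ) + -(2 * δ) * (i:ℝ)) * u ^ (θ * e)) := by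
        rw [show e + 1 = 2 / p from by rw [hedef]; ring]
        congr 2
        congr 1
        rw [hedef, hwdef, hδ]
        push_cast
        field_simp
        ring
    _ = ((2:ℝ) ^ e * M' ^ (2 / p) * (2:ℝ) ^ (-(2 * α) * (J:ℝ))) *
          (u ^ (θ * e) * ((2:ℝ) ^ (-(2 * δ))) ^ i) := by
        rw [my_two_rpow_nat_pow, Real.rpow_add two_pos, Real.rpow_add two_pos]
        ring

private lemma my_glue (f : ℕ → ℝ) (hf0 : ∀ j, 0 ≤ f j) {c t : ℝ} (hc : 0 ≤ c) (ht : 0 < t)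
    (hb : ∀ j : ℕ, f j ≤ c * (2:ℝ) ^ (-t * (j:ℝ))) (J : ℕ) :
    (2:ℝ) ^ (t * (J:ℝ)) * ∑' j : ℕ, (if J ≤ j then f j else 0)
      ≤ c * ∑' i : ℕ, ((i : ℝ) + 1) ^ (0:ℝ) * ((2:ℝ) ^ (-t)) ^ i := by
  have hr0 : (0:ℝ) ≤ (2:ℝ) ^ (-t) := Real.rpow_nonneg (by norm_num) _
  have hr1 : (2:ℝ) ^ (-t) < 1 :=
    Real.rpow_lt_one_of_one_lt_of_neg one_lt_two (by linarith)
  have hb' : ∀ i : ℕ, f (J + i) ≤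
      (c * (2:ℝ) ^ (-t * (J:ℝ))) * (((i:ℝ) + 1) ^ (0:ℝ) * ((2:ℝ) ^ (-t)) ^ i) := by
    intro i
    rw [Real.rpow_zero, one_mul, my_two_rpow_nat_pow]
    calc f (J + i) ≤ c * (2:ℝ) ^ (-t * ((J + i : ℕ):ℝ)) := hb (J + i)
      _ = (c * (2:ℝ) ^ (-t * (J:ℝ))) * (2:ℝ) ^ (-t * (i:ℝ)) := by
          rw [show -t * ((J + i : ℕ):ℝ) = -t * (J:ℝ) + -t * (i:ℝ) from by push_cast; ring,
            Real.rpow_add two_pos, ← mul_assoc]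
  have key := my_tsum_ite_le (le_refl (0:ℝ)) hr0 hr1 hf0 hb'
  calc (2:ℝ) ^ (t * (J:ℝ)) * ∑' j : ℕ, (if J ≤ j then f j else 0)
      ≤ (2:ℝ) ^ (t * (J:ℝ)) *
        ((c * (2:ℝ) ^ (-t * (J:ℝ))) * ∑' i : ℕ, ((i:ℝ) + 1) ^ (0:ℝ) * ((2:ℝ) ^ (-t)) ^ i) :=
        mul_le_mul_of_nonneg_left key (Real.rpow_nonneg (by norm_num) _)
    _ = (c * ∑' i : ℕ, ((i:ℝ) + 1) ^ (0:ℝ) * ((2:ℝ) ^ (-t)) ^ i) *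
          ((2:ℝ) ^ (t * (J:ℝ)) * (2:ℝ) ^ (-t * (J:ℝ))) := by ring
    _ = c * ∑' i : ℕ, ((i:ℝ) + 1) ^ (0:ℝ) * ((2:ℝ) ^ (-t)) ^ i := by
        rw [← Real.rpow_add two_pos, show t * (J:ℝ) + -t * (J:ℝ) = 0 from by ring,
          Real.rpow_zero, mul_one]

end MyAux

set_option maxHeartbeats 1000000 in
/-- the inclusion `B^α_{p,∞} ⊆ B^{α/(1+2α)}_{2,∞} ∩ A^α_θ` for
`p ≥ max(1, 2((1+2α)⁻¹ + 2α)⁻¹)`. -/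
theorem stmt_12 (α θ p : ℝ) (hα : 0 < α) (hθ : 2 < θ)
    (hp : max 1 (2 * ((1 + 2 * α)⁻¹ + 2 * α)⁻¹) ≤ p)
    (β : ℕ → ℕ → ℝ) (hβ : SqSummable β) (hbesov : CondBesov β α p) :
    CondB2 β α ∧ CondA β α θ := by
  obtain ⟨M, hM⟩ := hbesov
  have hp1 : (1:ℝ) ≤ p := le_trans (le_max_left _ _) hp
  have hp0 : (0:ℝ) < p := lt_of_lt_of_le one_pos hp1
  have hα1 : (0:ℝ) < 1 + 2 * α := by linarith
  have hs0 : 0 < α / (1 + 2 * α) := div_pos hα hα1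
  have hsα : α / (1 + 2 * α) ≤ α := by
    rw [div_le_iff₀ hα1]; nlinarith
  have hδdef : α + 1 / 2 - 1 / p = α + 1 / 2 - 1 / p := rfl
  set δ : ℝ := α + 1 / 2 - 1 / p with hδ
  have hp2' : 2 * ((1 + 2 * α)⁻¹ + 2 * α)⁻¹ ≤ p := le_trans (le_max_right _ _) hp
  have hD0 : (0:ℝ) < (1 + 2 * α)⁻¹ + 2 * α := by positivity
  have h1p : 1 / p ≤ ((1 + 2 * α)⁻¹ + 2 * α) / 2 := by
    rw [div_le_div_iff₀ hp0 two_pos]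
    have h2 := mul_le_mul_of_nonneg_right hp2' hD0.le
    rw [mul_assoc, inv_mul_cancel₀ (ne_of_gt hD0), mul_one] at h2
    nlinarith
  have hδs : α / (1 + 2 * α) ≤ δ := by
    have heq : α + 1 / 2 - ((1 + 2 * α)⁻¹ + 2 * α) / 2 = α / (1 + 2 * α) := by
      field_simp
      ring
    rw [hδ]
    linarith
  have hδ0 : 0 < δ := lt_of_lt_of_le hs0 hδs
  set M' : ℝ := M + 1 with hM'def
  have hM0 : 0 ≤ M := by
    have h0 := hM 0
    have h1 : ((0:ℕ):ℝ) * p * (α + 1 / 2 - 1 / p) = 0 := by push_cast; ring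
    rw [h1, Real.rpow_zero, one_mul] at h0
    refine le_trans ?_ h0
    exact Finset.sum_nonneg fun k _ => Real.rpow_nonneg (abs_nonneg _) _
  have hM' : 0 < M' := by rw [hM'def]; linarith
  have hS : ∀ j : ℕ, ∑ k ∈ Finset.range (2 ^ j), |β j k| ^ p
      ≤ M' * (2:ℝ) ^ (-((j:ℝ) * p * δ)) := by
    intro j
    have h := hM j
    have hpow : (0:ℝ) < (2:ℝ) ^ ((j:ℝ) * p * δ) := Real.rpow_pos_of_pos two_pos _
    rw [Real.rpow_neg (by norm_num : (0:ℝ) ≤ 2), mul_comm M', ← div_eq_inv_mul,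
      le_div_iff₀ hpow]
    calc (∑ k ∈ Finset.range (2 ^ j), |β j k| ^ p) * (2:ℝ) ^ ((j:ℝ) * p * δ)
        = (2:ℝ) ^ ((j:ℝ) * p * δ) * ∑ k ∈ Finset.range (2 ^ j), |β j k| ^ p := by ring
      _ ≤ M := h
      _ ≤ M' := by rw [hM'def]; linarith
  have hss : ∀ c : ℝ, α / (1 + 2 * α) ≤ c → ∀ j : ℕ,
      (2:ℝ) ^ (-(2 * c) * (j:ℝ)) ≤ (2:ℝ) ^ (-(2 * (α / (1 + 2 * α))) * (j:ℝ)) :=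
    fun c hc j => Real.rpow_le_rpow_of_exponent_le one_le_two
      (by nlinarith [Nat.cast_nonneg (α := ℝ) j])
  have hTs : ∀ j : ℕ, ∑ k ∈ Finset.range (2 ^ j), (β j k) ^ 2
      ≤ M' ^ (2 / p) * (2:ℝ) ^ (-(2 * (α / (1 + 2 * α))) * (j:ℝ)) := by
    intro j
    rcases le_total p 2 with hple | hpge
    · exact (my_level_ple2 β j hp1 hple hM' (hS j)).trans
        (mul_le_mul_of_nonneg_left (hss δ hδs j) (Real.rpow_nonneg hM'.le _))
    · exact (my_level_pge2 β j hpge hM' hδ (hS j)).trans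
        (mul_le_mul_of_nonneg_left (hss α hsα j) (Real.rpow_nonneg hM'.le _))
  constructor
  · refine ⟨M' ^ (2 / p) *
      ∑' i : ℕ, ((i:ℝ) + 1) ^ (0:ℝ) * ((2:ℝ) ^ (-(2 * (α / (1 + 2 * α))))) ^ i,
      fun J => ?_⟩
    have hrw : 2 * (J:ℝ) * α / (1 + 2 * α) = (2 * (α / (1 + 2 * α))) * (J:ℝ) := by ring
    rw [hrw]
    exact my_glue _ (fun j => Finset.sum_nonneg fun k _ => sq_nonneg _)
      (Real.rpow_nonneg hM'.le _) (by positivity) hTs J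
  · rcases le_total p 2 with hple | hpge
    · refine ⟨(2:ℝ) ^ (2 / p - 1) * M' ^ (2 / p) *
        ∑' i : ℕ, ((i:ℝ) + 1) ^ (θ * (2 / p - 1)) * ((2:ℝ) ^ (-(2 * δ))) ^ i,
        fun J => ?_⟩
      have he0 : (0:ℝ) ≤ 2 / p - 1 := by
        have h1 : 1 ≤ 2 / p := (le_div_iff₀ hp0).2 (by linarith)
        linarith
      have hq0 : (0:ℝ) ≤ θ * (2 / p - 1) := mul_nonneg (by linarith) he0
      have hr0 : (0:ℝ) ≤ (2:ℝ) ^ (-(2 * δ)) := Real.rpow_nonneg (by norm_num) _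
      have hr1 : (2:ℝ) ^ (-(2 * δ)) < 1 :=
        Real.rpow_lt_one_of_one_lt_of_neg one_lt_two (by linarith)
      have hb' : ∀ i : ℕ, tTail β θ J (J + i) ≤
          ((2:ℝ) ^ (2 / p - 1) * M' ^ (2 / p) * (2:ℝ) ^ (-(2 * α) * (J:ℝ))) *
            (((i:ℝ) + 1) ^ (θ * (2 / p - 1)) * ((2:ℝ) ^ (-(2 * δ))) ^ i) :=
        fun i => my_condA_bound β hp1 hple hM' hδ hS J i
      have key := my_tsum_ite_le (f := fun j => tTail β θ J j) hq0 hr0 hr1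
        (fun j => my_tTail_nonneg β θ J j) hb'
      have hfac : (0:ℝ) ≤ (2:ℝ) ^ ((2 * α) * (J:ℝ)) := Real.rpow_nonneg (by norm_num) _
      calc (2:ℝ) ^ (2 * (J:ℝ) * α) * ∑' j : ℕ, (if J ≤ j then tTail β θ J j else 0)
          = (2:ℝ) ^ ((2 * α) * (J:ℝ)) * ∑' j : ℕ, (if J ≤ j then tTail β θ J j else 0) := by
            rw [show 2 * (J:ℝ) * α = (2 * α) * (J:ℝ) from by ring]
        _ ≤ (2:ℝ) ^ ((2 * α) * (J:ℝ)) *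
            (((2:ℝ) ^ (2 / p - 1) * M' ^ (2 / p) * (2:ℝ) ^ (-(2 * α) * (J:ℝ))) *
              ∑' i : ℕ, ((i:ℝ) + 1) ^ (θ * (2 / p - 1)) * ((2:ℝ) ^ (-(2 * δ))) ^ i) :=
            mul_le_mul_of_nonneg_left key hfac
        _ = ((2:ℝ) ^ (2 / p - 1) * M' ^ (2 / p) *
              ∑' i : ℕ, ((i:ℝ) + 1) ^ (θ * (2 / p - 1)) * ((2:ℝ) ^ (-(2 * δ))) ^ i) *
            ((2:ℝ) ^ ((2 * α) * (J:ℝ)) * (2:ℝ) ^ (-(2 * α) * (J:ℝ))) := by ring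
        _ = (2:ℝ) ^ (2 / p - 1) * M' ^ (2 / p) *
              ∑' i : ℕ, ((i:ℝ) + 1) ^ (θ * (2 / p - 1)) * ((2:ℝ) ^ (-(2 * δ))) ^ i := by
            rw [← Real.rpow_add two_pos,
              show (2 * α) * (J:ℝ) + -(2 * α) * (J:ℝ) = 0 from by ring,
              Real.rpow_zero, mul_one]
    · refine ⟨M' ^ (2 / p) *
        ∑' i : ℕ, ((i:ℝ) + 1) ^ (0:ℝ) * ((2:ℝ) ^ (-(2 * α))) ^ i, fun J => ?_⟩
      rw [show 2 * (J:ℝ) * α = (2 * α) * (J:ℝ) from by ring]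
      exact my_glue (fun j => tTail β θ J j) (fun j => my_tTail_nonneg β θ J j)
        (Real.rpow_nonneg hM'.le _) (by positivity)
        (fun j => (my_tTail_le_sum β θ J j).trans (my_level_pge2 β j hpge hM' hδ (hS j))) J
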